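/- Let b(q,v) = ∑_{p=0}^{v} (−1)^p C(v,p) s(p+1, p−q+1), with s the signed Stirling numbers of the first kind. Then b(q,q+1) = −(q+1)! ∑_{k=2}^{q+1} 1/k for all q ≥ 1. -/

import Mathlib

open Finset Polynomial

/-- Signed Stirling numbers of the first kind: coefficient of x^k in x(x-1)⋯(x-n+1),
zero for negative k. -/
noncomputable def stirlingFst (n : ℕ) (k : ℤ) : ℤ :=
  if 0 ≤ k then (∏ i ∈ Finset.range n, (X - C (i : ℤ))).coeff k.toNat else 0

/-- b(q,v) = ∑_{p=0}^{v} (−1)^p C(v,p) s(p+1, p−q+1). -/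
noncomputable def b (q v : ℕ) : ℤ :=
  ∑ p ∈ Finset.range (v + 1), (-1 : ℤ) ^ p * (v.choose p) * stirlingFst (p + 1) ((p : ℤ) - q + 1)

lemma coeff_succ_step (n k : ℕ) :
    (∏ i ∈ Finset.range (n + 1), (X - C (i : ℤ))).coeff (k + 1)
      = (∏ i ∈ Finset.range n, (X - C (i : ℤ))).coeff k
        - (n : ℤ) * (∏ i ∈ Finset.range n, (X - C (i : ℤ))).coeff (k + 1) := by
  rw [Finset.prod_range_succ, Polynomial.coeff_mul_X_sub_C]
  ring

lemma coeff0 (n : ℕ) (hn : 1 ≤ n) :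
    (∏ i ∈ Finset.range n, (X - C (i : ℤ))).coeff 0 = 0 := by
  rw [Polynomial.coeff_zero_eq_eval_zero, Polynomial.eval_prod]
  apply Finset.prod_eq_zero (Finset.mem_range.mpr hn)
  simp

lemma coeff1 (n : ℕ) :
    (∏ i ∈ Finset.range (n + 1), (X - C (i : ℤ))).coeff 1 = (-1 : ℤ) ^ n * n.factorial := by
  induction n with
  | zero => simp [Finset.prod_range_one]
  | succ m ih =>
      rw [show (1 : ℕ) = 0 + 1 by rfl, coeff_succ_step, coeff0 (m + 1) (by omega)]
      rw [show (0 + 1 : ℕ) = 1 by rfl, ih, Nat.factorial_succ]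
      push_cast
      ring

lemma coeff2 (n : ℕ) (hn : 1 ≤ n) :
    ((∏ i ∈ Finset.range (n + 1), (X - C (i : ℤ))).coeff 2 : ℚ)
      = (-1) ^ (n + 1) * n.factorial * ∑ k ∈ Finset.Icc 1 n, (1 : ℚ) / (k : ℚ) := by
  induction n, hn using Nat.le_induction with
  | base =>
      rw [show (2 : ℕ) = 1 + 1 by rfl, coeff_succ_step, coeff1 0]
      have h2 : (∏ i ∈ Finset.range 1, (X - C (i : ℤ))).coeff (1 + 1) = 0 := by
        simp [Finset.prod_range_one, Polynomial.coeff_X]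
      rw [h2]
      norm_num
  | succ m hm ih =>
      rw [show (2 : ℕ) = 1 + 1 by rfl, coeff_succ_step, coeff1 m]
      push_cast
      rw [ih]
      rw [Finset.sum_Icc_succ_top (by omega : 1 ≤ m + 1)]
      rw [Nat.factorial_succ]
      have hm1 : ((m : ℚ) + 1) ≠ 0 := by positivity
      field_simp
      push_cast
      ring

/-- b(q,q+1) = −(q+1)! ∑_{k=2}^{q+1} 1/k for q ≥ 1. -/
theorem stmt12 (q : ℕ) (hq : 1 ≤ q) :
    (b q (q + 1) : ℚ) =
      -((q + 1).factorial : ℚ) * ∑ k ∈ Finset.Icc 2 (q + 1), (1 : ℚ) / (k : ℚ) := by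
  have hb : b q (q + 1)
      = (-1 : ℤ) ^ q * ((q+1).choose q) * stirlingFst (q + 1) 1
        + (-1 : ℤ) ^ (q+1) * ((q+1).choose (q+1)) * stirlingFst (q + 2) 2 := by
    unfold b
    rw [Finset.sum_range_succ, Finset.sum_range_succ]
    have hz : ∀ p ∈ Finset.range q,
        (-1 : ℤ) ^ p * ((q+1).choose p) * stirlingFst (p + 1) ((p : ℤ) - q + 1) = 0 := by
      intro p hp
      rw [Finset.mem_range] at hp
      have : stirlingFst (p + 1) ((p : ℤ) - q + 1) = 0 := by
        unfold stirlingFst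
        split
        · have : ((p : ℤ) - q + 1) = 0 := by omega
          rw [this]
          simpa using coeff0 (p + 1) (by omega)
        · rfl
      rw [this, mul_zero]
    rw [Finset.sum_eq_zero hz]
    have e1 : ((q : ℤ) - q + 1) = 1 := by ring
    have e2 : ((q : ℤ) + 1 - q + 1) = 2 := by ring
    push_cast
    rw [e1, e2]
    ring
  have hs1 : stirlingFst (q + 1) 1 = (-1) ^ q * q.factorial := by
    unfold stirlingFst
    rw [if_pos (by norm_num)]
    simpa using coeff1 q
  have hchoose : (q+1).choose q = q + 1 := by
    simp [Nat.choose_succ_self_right]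
  have hs2 : (stirlingFst (q + 2) 2 : ℚ)
      = (-1) ^ (q + 2) * (q+1).factorial * ∑ k ∈ Finset.Icc 1 (q+1), (1 : ℚ) / (k : ℚ) := by
    unfold stirlingFst
    rw [if_pos (by norm_num)]
    have := coeff2 (q + 1) (by omega)
    simpa using this
  have hIcc : Finset.Icc 1 (q + 1) = insert 1 (Finset.Icc 2 (q + 1)) := by
    ext x
    simp only [Finset.mem_Icc, Finset.mem_insert]
    omega
  have hsum : ∑ k ∈ Finset.Icc 1 (q+1), (1 : ℚ) / (k : ℚ)
      = 1 + ∑ k ∈ Finset.Icc 2 (q+1), (1 : ℚ) / (k : ℚ) := by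
    rw [hIcc, Finset.sum_insert (by simp)]
    norm_num
  rw [hb]
  push_cast [hs1, hchoose, Nat.choose_self]
  rw [hs2, hsum, Nat.factorial_succ]
  push_cast
  rcases Nat.even_or_odd q with h | h
  · have e1 : (-1 : ℚ) ^ q = 1 := h.neg_one_pow
    have e2 : (-1 : ℚ) ^ (q + 1) = -1 := by rw [pow_succ, e1]; ring
    have e3 : (-1 : ℚ) ^ (q + 2) = 1 := by rw [pow_add, e1]; norm_num
    rw [e1, e2, e3]
    ring
  · have e1 : (-1 : ℚ) ^ q = -1 := h.neg_one_pow
    have e2 : (-1 : ℚ) ^ (q + 1) = 1 := by rw [pow_succ, e1]; ring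
    have e3 : (-1 : ℚ) ^ (q + 2) = -1 := by rw [pow_add, e1]; norm_num
    rw [e1, e2, e3]
    ring
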